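/- Given two NFAs with at most m and n states respectively whose languages admit no infinite tower of prefixes, every tower of prefixes between their languages has height at most 2^{m+n-1}. -/

import Mathlib

/-- A finite tower of prefixes of height `r` between `K` and `L`. -/
def PrefTower {α : Type*} (K L : Set (List α)) (r : ℕ) (w : ℕ → List α) : Prop :=
  (0 < r → w 0 ∈ K ∪ L) ∧
    ∀ i, i + 1 < r →
      w i <+: w (i + 1) ∧
        (w i ∈ K → w (i + 1) ∈ L) ∧ (w i ∈ L → w (i + 1) ∈ K)

/-- An infinite tower of prefixes between `K` and `L`. -/
def InfPrefTower {α : Type*} (K L : Set (List α)) (w : ℕ → List α) : Prop :=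
  w 0 ∈ K ∪ L ∧
    ∀ i, w i <+: w (i + 1) ∧
      (w i ∈ K → w (i + 1) ∈ L) ∧ (w i ∈ L → w (i + 1) ∈ K)

namespace PTAux

open List
open scoped Classical

variable {α : Type*}

theorem infComm {K L : Set (List α)} {w : ℕ → List α} (h : InfPrefTower K L w) :
    InfPrefTower L K w :=
  ⟨by rcases h.1 with h' | h'; exacts [Or.inr h', Or.inl h'],
   fun i => ⟨(h.2 i).1, (h.2 i).2.2, (h.2 i).2.1⟩⟩

theorem flatten_rep_succ (t : ℕ) (c : List α) :
    (replicate (t + 1) c).flatten = (replicate t c).flatten ++ c := by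
  rw [replicate_succ', flatten_append]; simp

theorem pump (K L : Set (List α)) (u c d : List α) (hd : d <+: c)
    (hK : ∀ t, u ++ (replicate t c).flatten ∈ K)
    (hKL : ∀ t, u ++ (replicate t c).flatten ∉ L)
    (hL : ∀ t, u ++ (replicate t c).flatten ++ d ∈ L)
    (hLK : ∀ t, u ++ (replicate t c).flatten ++ d ∉ K) :
    ∃ W, InfPrefTower K L W := by
  refine ⟨fun n => u ++ (replicate (n / 2) c).flatten ++ (if n % 2 = 1 then d else []), ?_, ?_⟩
  · left; simpa using hK 0
  · intro i
    rcases Nat.even_or_odd i with ⟨t, ht⟩ | ⟨t, ht⟩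
    · have h1 : (t + t) / 2 = t := by omega
      have h2 : ¬((t + t) % 2 = 1) := by omega
      have h3 : (t + t + 1) / 2 = t := by omega
      have h4 : (t + t + 1) % 2 = 1 := by omega
      subst ht
      simp only [h1, h3, if_neg h2, if_pos h4, append_nil]
      exact ⟨(u ++ (replicate t c).flatten).prefix_append d,
        fun _ => hL t, fun h => absurd h (hKL t)⟩
    · have h1 : i / 2 = t := by omega
      have h2 : i % 2 = 1 := by omega
      have h3 : (i + 1) / 2 = t + 1 := by omega
      have h4 : ¬((i + 1) % 2 = 1) := by omega
      simp only [h1, h3, if_pos h2, if_neg h4, append_nil, flatten_rep_succ, ← append_assoc]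
      exact ⟨(prefix_append_right_inj _).mpr hd,
        fun h => absurd h (hLK t),
        fun _ => by rw [append_assoc, ← flatten_rep_succ]; exact hK (t + 1)⟩

variable {σ : Type*}

theorem evalAppend (M : NFA α σ) (x y : List α) :
    M.eval (x ++ y) = M.evalFrom (M.eval x) y := by
  simp [NFA.eval, NFA.evalFrom, List.foldl_append]

theorem evalPow (M : NFA α σ) (u c : List α) (h : M.eval (u ++ c) = M.eval u) :
    ∀ t, M.eval (u ++ (replicate t c).flatten) = M.eval u
  | 0 => by simp
  | (t + 1) => by
    have he : u ++ (replicate (t + 1) c).flatten = (u ++ c) ++ (replicate t c).flatten := by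
      simp [replicate_succ]
    rw [he, evalAppend, h, ← evalAppend, evalPow M u c h t]

theorem accMem (M : NFA α σ) {x y : List α} (h : M.eval x = M.eval y) :
    x ∈ M.accepts ↔ y ∈ M.accepts := by
  have hz : ∀ z : List α, z ∈ M.accepts ↔ ∃ q ∈ M.accept, q ∈ M.eval z := fun z =>
    NFA.mem_accepts
  rw [hz, hz, h]

theorem cardPairs {β γ : Type*} [Fintype β] [Fintype γ] (p : β → Prop) (q : γ → Prop) :
    Fintype.card {s : β × γ // p s.1 ∧ q s.2} =
      Fintype.card {x // p x} * Fintype.card {y // q y} := by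
  classical
  rw [Fintype.card_congr (Equiv.subtypeProdEquivProd), Fintype.card_prod]

theorem main_aux {σA σB : Type*} [Fintype σA] [Fintype σB]
    (A : NFA α σA) (B : NFA α σB)
    (hno : ¬ ∃ w : ℕ → List α,
      InfPrefTower (A.accepts : Set (List α)) (B.accepts : Set (List α)) w)
    (r : ℕ) (w : ℕ → List α)
    (ht : PrefTower (A.accepts : Set (List α)) (B.accepts : Set (List α)) r w)
    (hr2 : 2 ≤ r) (h0 : w 0 ∈ A.accepts) :
    r ≤ 2 ^ (Fintype.card σA + Fintype.card σB - 1) := by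
  set K : Set (List α) := (A.accepts : Set (List α)) with hKdef
  set L : Set (List α) := (B.accepts : Set (List α)) with hLdef
  have hdisj : ∀ x, x ∈ K → x ∈ L → False := by
    intro x hxK hxL
    exact hno ⟨fun _ => x, Or.inl hxK, fun i => ⟨List.prefix_rfl, fun _ => hxL, fun _ => hxK⟩⟩
  have hmem : ∀ i, i < r → w i ∈ K ∪ L := by
    intro i
    induction i with
    | zero => exact fun h => ht.1 h
    | succ i ih =>
      intro h
      rcases ih (by omega) with hK | hL
      · exact Or.inr ((ht.2 i h).2.1 hK)
      · exact Or.inl ((ht.2 i h).2.2 hL)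
  have hpref : ∀ i j, i ≤ j → j < r → w i <+: w j := by
    intro i j hij hjr
    induction j with
    | zero =>
      have hi0 : i = 0 := by omega
      subst hi0; exact List.prefix_rfl
    | succ j ih =>
      rcases Nat.lt_or_ge i (j + 1) with h' | h'
      · exact (ih (by omega) (by omega)).trans (ht.2 j hjr).1
      · have hij1 : i = j + 1 := by omega
        subst hij1; exact List.prefix_rfl
  have halt : ∀ i, i < r → (Even i → w i ∈ K) ∧ (¬ Even i → w i ∈ L) := by
    intro i
    induction i with
    | zero => exact fun _ => ⟨fun _ => h0, fun h => absurd Even.zero h⟩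
    | succ i ih =>
      intro h
      constructor
      · intro hev
        have hodd : ¬ Even i := by
          rw [Nat.even_add_one] at hev; exact hev
        exact (ht.2 i h).2.2 ((ih (by omega)).2 hodd)
      · intro hodd
        have hev : Even i := by
          rw [Nat.even_add_one, not_not] at hodd; exact hodd
        exact (ht.2 i h).2.1 ((ih (by omega)).1 hev)
  have hA1 : 1 ≤ Fintype.card σA := by
    rcases NFA.mem_accepts.mp h0 with ⟨q, _, _⟩
    exact Fintype.card_pos_iff.mpr ⟨q⟩
  have h1L : w 1 ∈ L := (ht.2 0 (by omega)).2.1 h0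
  have hB1 : 1 ≤ Fintype.card σB := by
    rcases NFA.mem_accepts.mp h1L with ⟨q, _, _⟩
    exact Fintype.card_pos_iff.mpr ⟨q⟩
  have hinj : ∀ i j, i < j → j < r → A.eval (w i) = A.eval (w j) →
      B.eval (w i) = B.eval (w j) → False := by
    intro i j hij hjr hA hB
    obtain ⟨c, hc⟩ := hpref i j (le_of_lt hij) hjr
    obtain ⟨d, hd⟩ := hpref i (i + 1) (by omega) (by omega)
    have hdc : d <+: c := by
      have h1 : w (i + 1) <+: w j := hpref (i + 1) j (by omega) hjr
      rw [← hc, ← hd] at h1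
      exact (List.prefix_append_right_inj _).mp h1
    have heA : A.eval (w i ++ c) = A.eval (w i) := by rw [hc, ← hA]
    have heB : B.eval (w i ++ c) = B.eval (w i) := by rw [hc, ← hB]
    have hKt := evalPow A (w i) c heA
    have hLt := evalPow B (w i) c heB
    have hiffK : ∀ t, (w i ++ (replicate t c).flatten ∈ K) ↔ (w i ∈ K) :=
      fun t => accMem A (hKt t)
    have hiffL : ∀ t, (w i ++ (replicate t c).flatten ∈ L) ↔ (w i ∈ L) :=
      fun t => accMem B (hLt t)
    have heAd : ∀ t, A.eval (w i ++ (replicate t c).flatten ++ d) = A.eval (w (i + 1)) := by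
      intro t
      rw [evalAppend, hKt t, ← evalAppend, hd]
    have heBd : ∀ t, B.eval (w i ++ (replicate t c).flatten ++ d) = B.eval (w (i + 1)) := by
      intro t
      rw [evalAppend, hLt t, ← evalAppend, hd]
    have hiffKd : ∀ t, (w i ++ (replicate t c).flatten ++ d ∈ K) ↔ (w (i + 1) ∈ K) :=
      fun t => accMem A (heAd t)
    have hiffLd : ∀ t, (w i ++ (replicate t c).flatten ++ d ∈ L) ↔ (w (i + 1) ∈ L) :=
      fun t => accMem B (heBd t)
    rcases hmem i (by omega) with hiK | hiL
    · have hi1L : w (i + 1) ∈ L := (ht.2 i (by omega)).2.1 hiK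
      exact hno (pump K L (w i) c d hdc
        (fun t => (hiffK t).mpr hiK)
        (fun t h => hdisj _ hiK ((hiffL t).mp h))
        (fun t => (hiffLd t).mpr hi1L)
        (fun t h => hdisj _ ((hiffKd t).mp h) hi1L))
    · have hi1K : w (i + 1) ∈ K := (ht.2 i (by omega)).2.2 hiL
      rcases pump L K (w i) c d hdc
        (fun t => (hiffL t).mpr hiL)
        (fun t h => hdisj _ ((hiffK t).mp h) hiL)
        (fun t => (hiffKd t).mpr hi1K)
        (fun t h => hdisj _ hi1K ((hiffLd t).mp h)) with ⟨W, hW⟩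
      exact hno ⟨W, infComm hW⟩
  -- counting
  have hmemK : ∀ x : List α, x ∈ K ↔ (∃ q ∈ A.accept, q ∈ A.eval x) := fun x =>
    NFA.mem_accepts
  have hmemL : ∀ x : List α, x ∈ L ↔ (∃ q ∈ B.accept, q ∈ B.eval x) := fun x =>
    NFA.mem_accepts
  set X := Fintype.card {s : Set σA × Set σB //
    (∃ q ∈ A.accept, q ∈ s.1) ∧ ¬ (∃ q ∈ B.accept, q ∈ s.2)} with hXdef
  set Y := Fintype.card {s : Set σA × Set σB //
    (¬ ∃ q ∈ A.accept, q ∈ s.1) ∧ (∃ q ∈ B.accept, q ∈ s.2)} with hYdef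
  have hXc : (r + 1) / 2 ≤ X := by
    have hlt : ∀ i : Fin ((r + 1) / 2), 2 * (i : ℕ) < r := fun i => by
      have := i.2; omega
    have hprop : ∀ i : Fin ((r + 1) / 2),
        (∃ q ∈ A.accept, q ∈ A.eval (w (2 * (i : ℕ)))) ∧
          ¬ (∃ q ∈ B.accept, q ∈ B.eval (w (2 * (i : ℕ)))) := by
      intro i
      have hK2 : w (2 * (i : ℕ)) ∈ K := (halt _ (hlt i)).1 ⟨(i : ℕ), two_mul _⟩
      exact ⟨(hmemK _).mp hK2, fun hb => hdisj _ hK2 ((hmemL _).mpr hb)⟩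
    have hinj2 : Function.Injective (fun i : Fin ((r + 1) / 2) =>
        (⟨(A.eval (w (2 * (i : ℕ))), B.eval (w (2 * (i : ℕ)))), hprop i⟩ :
          {s : Set σA × Set σB //
            (∃ q ∈ A.accept, q ∈ s.1) ∧ ¬ (∃ q ∈ B.accept, q ∈ s.2)})) := by
      intro i j hij
      have h1 : A.eval (w (2 * (i : ℕ))) = A.eval (w (2 * (j : ℕ))) :=
        congrArg (fun z => z.val.1) hij
      have h2 : B.eval (w (2 * (i : ℕ))) = B.eval (w (2 * (j : ℕ))) :=
        congrArg (fun z => z.val.2) hij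
      rcases Nat.lt_trichotomy (i : ℕ) (j : ℕ) with h | h | h
      · exact (hinj (2 * i) (2 * j) (by omega) (hlt j) h1 h2).elim
      · exact Fin.ext h
      · exact (hinj (2 * j) (2 * i) (by omega) (hlt i) h1.symm h2.symm).elim
    calc (r + 1) / 2 = Fintype.card (Fin ((r + 1) / 2)) := (Fintype.card_fin _).symm
      _ ≤ X := Fintype.card_le_of_injective _ hinj2
  have hYc : r / 2 ≤ Y := by
    have hlt : ∀ i : Fin (r / 2), 2 * (i : ℕ) + 1 < r := fun i => by
      have := i.2; omega
    have hprop : ∀ i : Fin (r / 2),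
        (¬ ∃ q ∈ A.accept, q ∈ A.eval (w (2 * (i : ℕ) + 1))) ∧
          (∃ q ∈ B.accept, q ∈ B.eval (w (2 * (i : ℕ) + 1))) := by
      intro i
      have hodd : ¬ Even (2 * (i : ℕ) + 1) := by
        rw [Nat.even_add_one, not_not]
        exact ⟨(i : ℕ), two_mul _⟩
      have hL2 : w (2 * (i : ℕ) + 1) ∈ L := (halt _ (hlt i)).2 hodd
      exact ⟨fun ha => hdisj _ ((hmemK _).mpr ha) hL2, (hmemL _).mp hL2⟩
    have hinj2 : Function.Injective (fun i : Fin (r / 2) =>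
        (⟨(A.eval (w (2 * (i : ℕ) + 1)), B.eval (w (2 * (i : ℕ) + 1))), hprop i⟩ :
          {s : Set σA × Set σB //
            (¬ ∃ q ∈ A.accept, q ∈ s.1) ∧ (∃ q ∈ B.accept, q ∈ s.2)})) := by
      intro i j hij
      have h1 : A.eval (w (2 * (i : ℕ) + 1)) = A.eval (w (2 * (j : ℕ) + 1)) :=
        congrArg (fun z => z.val.1) hij
      have h2 : B.eval (w (2 * (i : ℕ) + 1)) = B.eval (w (2 * (j : ℕ) + 1)) :=
        congrArg (fun z => z.val.2) hij
      rcases Nat.lt_trichotomy (i : ℕ) (j : ℕ) with h | h | h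
      · exact (hinj _ _ (by omega) (hlt j) h1 h2).elim
      · exact Fin.ext h
      · exact (hinj _ _ (by omega) (hlt i) h1.symm h2.symm).elim
    calc r / 2 = Fintype.card (Fin (r / 2)) := (Fintype.card_fin _).symm
      _ ≤ Y := Fintype.card_le_of_injective _ hinj2
  -- cardinal identities
  set a := Fintype.card {P : Set σA // ∃ q ∈ A.accept, q ∈ P} with hadef
  set b := Fintype.card {Q : Set σB // ∃ q ∈ B.accept, q ∈ Q} with hbdef
  set cA := Fintype.card σA with hcA
  set cB := Fintype.card σB with hcB
  have hXeq : X = a * (2 ^ cB - b) := by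
    rw [hXdef, hadef]
    have e : {s : Set σA × Set σB // (∃ q ∈ A.accept, q ∈ s.1) ∧ ¬∃ q ∈ B.accept, q ∈ s.2}
        ≃ {P : Set σA // ∃ q ∈ A.accept, q ∈ P} × {Q : Set σB // ¬∃ q ∈ B.accept, q ∈ Q} :=
      @Equiv.subtypeProdEquivProd (Set σA) (Set σB)
        (fun P => ∃ q ∈ A.accept, q ∈ P) (fun Q => ¬∃ q ∈ B.accept, q ∈ Q)
    rw [Fintype.card_congr e, Fintype.card_prod]
    congr 1
    rw [Fintype.card_subtype_compl, Fintype.card_set]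
  have hYeq : Y = (2 ^ cA - a) * b := by
    rw [hYdef, hbdef]
    have e : {s : Set σA × Set σB // (¬∃ q ∈ A.accept, q ∈ s.1) ∧ ∃ q ∈ B.accept, q ∈ s.2}
        ≃ {P : Set σA // ¬∃ q ∈ A.accept, q ∈ P} × {Q : Set σB // ∃ q ∈ B.accept, q ∈ Q} :=
      @Equiv.subtypeProdEquivProd (Set σA) (Set σB)
        (fun P => ¬∃ q ∈ A.accept, q ∈ P) (fun Q => ∃ q ∈ B.accept, q ∈ Q)
    rw [Fintype.card_congr e, Fintype.card_prod]
    congr 1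
    rw [Fintype.card_subtype_compl, Fintype.card_set]
  have haM : a ≤ 2 ^ cA := by
    rw [hadef, ← Fintype.card_set (α := σA)]
    exact Fintype.card_subtype_le _
  have hbN : b ≤ 2 ^ cB := by
    rw [hbdef, ← Fintype.card_set (α := σB)]
    exact Fintype.card_subtype_le _
  set cc := 2 ^ (cA + cB - 2) with hccdef
  have h4cc : 4 * cc = 2 ^ (cA + cB) := by
    rw [hccdef, show (4 : ℕ) = 2 ^ 2 by norm_num, ← pow_add]
    congr 1
    omega
  have hprod : X * Y ≤ cc * cc := by
    have e1 : 4 * (a * (2 ^ cA - a)) ≤ 2 ^ cA * 2 ^ cA := by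
      set k := 2 ^ cA - a with hk
      have hka : a + k = 2 ^ cA := by omega
      calc 4 * (a * k) ≤ a * a + 2 * (a * k) + k * k := by nlinarith [two_mul_le_add_sq a k]
        _ = (a + k) * (a + k) := by ring
        _ = 2 ^ cA * 2 ^ cA := by rw [hka]
    have e2 : 4 * (b * (2 ^ cB - b)) ≤ 2 ^ cB * 2 ^ cB := by
      set k := 2 ^ cB - b with hk
      have hkb : b + k = 2 ^ cB := by omega
      calc 4 * (b * k) ≤ b * b + 2 * (b * k) + k * k := by nlinarith [two_mul_le_add_sq b k]
        _ = (b + k) * (b + k) := by ring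
        _ = 2 ^ cB * 2 ^ cB := by rw [hkb]
    have e3 : 16 * (X * Y) ≤ (2 ^ cA * 2 ^ cA) * (2 ^ cB * 2 ^ cB) := by
      have : X * Y = (a * (2 ^ cA - a)) * (b * (2 ^ cB - b)) := by
        rw [hXeq, hYeq]; ring
      rw [this, show (16 : ℕ) = 4 * 4 by norm_num]
      calc 4 * 4 * ((a * (2 ^ cA - a)) * (b * (2 ^ cB - b)))
          = (4 * (a * (2 ^ cA - a))) * (4 * (b * (2 ^ cB - b))) := by ring
        _ ≤ (2 ^ cA * 2 ^ cA) * (2 ^ cB * 2 ^ cB) := Nat.mul_le_mul e1 e2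
    have e4 : (2 ^ cA * 2 ^ cA) * (2 ^ cB * 2 ^ cB) = 16 * (cc * cc) := by
      have : (2 ^ cA * 2 ^ cA) * (2 ^ cB * 2 ^ cB) = (2 ^ (cA + cB)) * (2 ^ (cA + cB)) := by
        rw [pow_add]; ring
      rw [this, ← h4cc]; ring
    have := e3.trans (le_of_eq e4)
    omega
  have hccpos : 0 < cc := Nat.pow_pos (by norm_num)
  have hfin : r ≤ 2 * cc := by
    rcases le_or_gt X cc with hXle | hXgt
    · omega
    · by_contra hcon
      push_neg at hcon
      have hYge : cc ≤ Y := by omega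
      have hm1 : (cc + 1) * cc ≤ X * Y := Nat.mul_le_mul (by omega) hYge
      have hm2 := hm1.trans hprod
      have := Nat.le_of_mul_le_mul_right hm2 hccpos
      omega
  have h2cc : 2 * cc = 2 ^ (cA + cB - 1) := by
    rw [hccdef, ← pow_succ']
    congr 1
    omega
  omega

end PTAux

theorem nfa_pref_tower_height_le {α σA σB : Type*} [Fintype σA] [Fintype σB]
    (A : NFA α σA) (B : NFA α σB) (m n : ℕ)
    (hm : Fintype.card σA ≤ m) (hn : Fintype.card σB ≤ n)
    (hno : ¬ ∃ w : ℕ → List α,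
      InfPrefTower (A.accepts : Set (List α)) (B.accepts : Set (List α)) w) :
    ∀ (r : ℕ) (w : ℕ → List α),
      PrefTower (A.accepts : Set (List α)) (B.accepts : Set (List α)) r w →
        r ≤ 2 ^ (m + n - 1) := by
  intro r w ht
  rcases Nat.lt_or_ge r 2 with hr | hr
  · have h1 : 0 < 2 ^ (m + n - 1) := Nat.pow_pos (by norm_num)
    omega
  · have h0 := ht.1 (show 0 < r by omega)
    rcases h0 with h0 | h0
    · exact (PTAux.main_aux A B hno r w ht hr h0).trans
        (Nat.pow_le_pow_right (by norm_num) (by omega))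
    · have hno' : ¬ ∃ w : ℕ → List α,
          InfPrefTower (B.accepts : Set (List α)) (A.accepts : Set (List α)) w := by
        rintro ⟨W, hW⟩
        exact hno ⟨W, PTAux.infComm hW⟩
      have ht' : PrefTower (B.accepts : Set (List α)) (A.accepts : Set (List α)) r w := by
        refine ⟨fun h => ?_, fun i hi => ⟨(ht.2 i hi).1, (ht.2 i hi).2.2, (ht.2 i hi).2.1⟩⟩
        rcases ht.1 h with h' | h'
        exacts [Or.inr h', Or.inl h']
      exact (PTAux.main_aux B A hno' r w ht' hr h0).trans
        (Nat.pow_le_pow_right (by norm_num) (by omega))
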